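/- Let H and H₀ be real Hilbert spaces and ι : H → H₀ an injective compact linear operator. Let A : H → H be a continuous linear map that is symmetric (⟨Ax, y⟩ = ⟨x, Ay⟩) and nonnegative (⟨Ah, h⟩ ≥ 0), and suppose there are constants c′ > 0 and c″ > 0 such that ⟨Ah, h⟩ ≥ c′‖h‖²_H − c″‖ι h‖²_{H₀} for all h ∈ H. Then the kernel Λ := ker A is a finite-dimensional subspace of H, and there exists c > 0 such that ⟨Ah, h⟩ ≥ c‖h − Ph‖²_H for all h ∈ H, where P is the orthogonal projection of H onto Λ. -/

import Mathlib

open scoped RealInnerProductSpace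
open Filter Topology Metric

section Aux

variable {H : Type*} [NormedAddCommGroup H] [InnerProductSpace ℝ H]

/-- If a symmetric nonnegative operator has vanishing quadratic form at `x`,
then `A x = 0` (Cauchy–Schwarz for the semi-inner product `⟪A·,·⟫`). -/
lemma aux_apply_eq_zero_of_quadratic_eq_zero (A : H →L[ℝ] H)
    (hAsym : ∀ x y : H, ⟪A x, y⟫ = ⟪x, A y⟫)
    (hApos : ∀ h : H, 0 ≤ ⟪A h, h⟫) {x : H} (hx : ⟪A x, x⟫ = 0) : A x = 0 := by
  have key : ∀ y : H, ⟪A x, y⟫ = 0 := by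
    intro y
    have hyx : ⟪A y, x⟫ = ⟪A x, y⟫ := by
      rw [hAsym y x, real_inner_comm]
    have hq : ∀ t : ℝ, 0 ≤ ⟪A y, y⟫ * (t * t) + (2 * ⟪A x, y⟫) * t + ⟪A x, x⟫ := by
      intro t
      have h0 := hApos (x + t • y)
      have hexp : ⟪A (x + t • y), x + t • y⟫
          = ⟪A y, y⟫ * (t * t) + (2 * ⟪A x, y⟫) * t + ⟪A x, x⟫ := by
        simp only [map_add, map_smul, inner_add_left, inner_add_right,
          real_inner_smul_left, real_inner_smul_right, hyx]
        ring
      linarith [hexp ▸ h0]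
    have hd := discrim_le_zero hq
    rw [discrim, hx] at hd
    nlinarith [sq_nonneg ⟪A x, y⟫]
  have h := key (A x)
  exact inner_self_eq_zero.mp h

/-- Parallelogram-type bound for the quadratic form of a nonnegative operator. -/
lemma aux_quadratic_sub_le (A : H →L[ℝ] H)
    (hApos : ∀ h : H, 0 ≤ ⟪A h, h⟫) (u w : H) :
    ⟪A (u - w), u - w⟫ ≤ 2 * ⟪A u, u⟫ + 2 * ⟪A w, w⟫ := by
  have h1 := hApos (u + w)
  have hexp : ⟪A (u - w), u - w⟫ + ⟪A (u + w), u + w⟫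
      = 2 * ⟪A u, u⟫ + 2 * ⟪A w, w⟫ := by
    simp only [map_add, map_sub, inner_add_left, inner_add_right,
      inner_sub_left, inner_sub_right]
    ring
  linarith

end Aux

/-- Abstract content of Lemma 3.1 (c), (e): a symmetric nonnegative continuous
linear operator `A` on a Hilbert space satisfying a Gårding-type inequality
with respect to an injective compact embedding `ι` has finite-dimensional
kernel `Λ = ker A`, and `⟨Ah, h⟩` dominates a positive multiple of the squared
distance `‖h − Ph‖²` to the kernel, `P` being the orthogonal projection onto
`Λ`. -/
theorem garding_implies_coercive_mod_kernel
    {H H₀ : Type*} [NormedAddCommGroup H] [InnerProductSpace ℝ H] [CompleteSpace H]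
    [NormedAddCommGroup H₀] [InnerProductSpace ℝ H₀] [CompleteSpace H₀]
    (ι : H →L[ℝ] H₀) (hιinj : Function.Injective ι)
    (hιcomp : IsCompactOperator ι)
    (A : H →L[ℝ] H)
    (hAsym : ∀ x y : H, ⟪A x, y⟫ = ⟪x, A y⟫)
    (hApos : ∀ h : H, 0 ≤ ⟪A h, h⟫)
    (c' c'' : ℝ) (hc' : 0 < c') (hc'' : 0 < c'')
    (hgarding : ∀ h : H, ⟪A h, h⟫ ≥ c' * ‖h‖ ^ 2 - c'' * ‖ι h‖ ^ 2) :
    FiniteDimensional ℝ (LinearMap.ker (A : H →ₗ[ℝ] H)) ∧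
      ∃ (c : ℝ) (P : H →L[ℝ] H), 0 < c ∧
        (∀ h : H, P h ∈ LinearMap.ker (A : H →ₗ[ℝ] H)) ∧
        (∀ h : H, ∀ χ ∈ LinearMap.ker (A : H →ₗ[ℝ] H), ⟪h - P h, χ⟫ = 0) ∧
        ∀ h : H, ⟪A h, h⟫ ≥ c * ‖h - P h‖ ^ 2 := by
  set Λ : Submodule ℝ H := LinearMap.ker (A : H →ₗ[ℝ] H) with hΛdef
  have hΛclosed : IsClosed (Λ : Set H) := ContinuousLinearMap.isClosed_ker A
  -- Key compactness lemma: a bounded sequence whose quadratic energy tends to 0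
  -- has a convergent subsequence.
  have key : ∀ v : ℕ → H, (∀ n, ‖v n‖ ≤ 1) →
      Tendsto (fun n => ⟪A (v n), v n⟫) atTop (𝓝 0) →
      ∃ (x : H) (φ : ℕ → ℕ), StrictMono φ ∧ Tendsto (v ∘ φ) atTop (𝓝 x) := by
    intro v hv hve
    have hcomp : IsCompact (closure <| ι.toLinearMap '' Metric.closedBall 0 1) :=
      IsCompactOperator.isCompact_closure_image_closedBall (𝕜₁ := ℝ)
        (f := ι.toLinearMap) hιcomp 1
    have hmem : ∀ n, ι (v n) ∈ closure (ι.toLinearMap '' Metric.closedBall 0 1) := by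
      intro n
      exact subset_closure ⟨v n, by simpa [mem_closedBall_zero_iff] using hv n, rfl⟩
    obtain ⟨y, -, φ, hφ, hy⟩ := hcomp.tendsto_subseq hmem
    have hιcauchy : CauchySeq (fun k => ι (v (φ k))) := hy.cauchySeq
    have heφ : Tendsto (fun k => ⟪A (v (φ k)), v (φ k)⟫) atTop (𝓝 0) :=
      hve.comp hφ.tendsto_atTop
    have hcauchy : CauchySeq (v ∘ φ) := by
      rw [Metric.cauchySeq_iff]
      intro ε hε
      have hδ1 : (0 : ℝ) < c' * ε ^ 2 / 16 := by positivity
      set δ₂ : ℝ := Real.sqrt (c' * ε ^ 2 / (4 * c'')) with hδ₂def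
      have hδ2 : (0 : ℝ) < δ₂ := Real.sqrt_pos.mpr (by positivity)
      have hδ2sq : δ₂ ^ 2 = c' * ε ^ 2 / (4 * c'') := Real.sq_sqrt (by positivity)
      obtain ⟨N₁, hN₁⟩ := (Metric.tendsto_atTop.mp heφ) (c' * ε ^ 2 / 16) hδ1
      obtain ⟨N₂, hN₂⟩ := (Metric.cauchySeq_iff.mp hιcauchy) δ₂ hδ2
      refine ⟨max N₁ N₂, fun m hm n hn => ?_⟩
      have hm1 : m ≥ N₁ := le_trans (le_max_left _ _) hm
      have hn1 : n ≥ N₁ := le_trans (le_max_left _ _) hn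
      have hm2 : m ≥ N₂ := le_trans (le_max_right _ _) hm
      have hn2 : n ≥ N₂ := le_trans (le_max_right _ _) hn
      have hem : ⟪A (v (φ m)), v (φ m)⟫ < c' * ε ^ 2 / 16 := by
        have := hN₁ m hm1
        rw [Real.dist_eq, abs_sub_lt_iff] at this
        linarith [this.1]
      have hen : ⟪A (v (φ n)), v (φ n)⟫ < c' * ε ^ 2 / 16 := by
        have := hN₁ n hn1
        rw [Real.dist_eq, abs_sub_lt_iff] at this
        linarith [this.1]
      have hiun : dist (ι (v (φ m))) (ι (v (φ n))) < δ₂ := hN₂ m hm2 n hn2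
      set w : H := v (φ m) - v (φ n) with hwdef
      have hg := hgarding w
      have hpar := aux_quadratic_sub_le A hApos (v (φ m)) (v (φ n))
      have hιw : ‖ι w‖ < δ₂ := by
        have : ι w = ι (v (φ m)) - ι (v (φ n)) := by rw [hwdef, map_sub]
        rw [this, ← dist_eq_norm]
        exact hiun
      have hιwsq : ‖ι w‖ ^ 2 < δ₂ ^ 2 := by
        have := pow_lt_pow_left₀ hιw (norm_nonneg _) (n := 2) (by norm_num)
        exact this
      have hιwsq' : c'' * ‖ι w‖ ^ 2 < c' * ε ^ 2 / 4 := by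
        calc c'' * ‖ι w‖ ^ 2 < c'' * δ₂ ^ 2 := by
              exact mul_lt_mul_of_pos_left hιwsq hc''
          _ = c' * ε ^ 2 / 4 := by rw [hδ2sq]; field_simp
      have hnormsq : c' * ‖w‖ ^ 2 < c' * ε ^ 2 := by
        have hAw : ⟪A w, w⟫ ≤ 2 * ⟪A (v (φ m)), v (φ m)⟫ + 2 * ⟪A (v (φ n)), v (φ n)⟫ :=
          hpar
        nlinarith [hg]
      have hwlt : ‖w‖ < ε := by
        have h2 : ‖w‖ ^ 2 < ε ^ 2 := lt_of_mul_lt_mul_left hnormsq hc'.le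
        exact lt_of_pow_lt_pow_left₀ 2 (le_of_lt hε) h2
      show dist ((v ∘ φ) m) ((v ∘ φ) n) < ε
      rw [Function.comp_apply, Function.comp_apply, dist_eq_norm]
      exact hwlt
    obtain ⟨x, hx⟩ := cauchySeq_tendsto_of_complete hcauchy
    exact ⟨x, φ, hφ, hx⟩
  haveI hΛcomplete : CompleteSpace Λ := hΛclosed.completeSpace_coe
  -- Finite dimensionality of the kernel via Riesz's theorem.
  have hfin : FiniteDimensional ℝ Λ := by
    have hseq : IsSeqCompact (Metric.closedBall (0 : Λ) 1) := by
      intro u hu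
      have hv : ∀ n, ‖((u n : H))‖ ≤ 1 := by
        intro n
        have := hu n
        rw [mem_closedBall_zero_iff] at this
        simpa using this
      have hz : (fun n => ⟪A ((u n : H)), (u n : H)⟫) = fun _ => (0 : ℝ) := by
        funext n
        have hker : A ((u n : H)) = 0 := (u n).2
        simp [hker]
      obtain ⟨x, φ, hφ, hx⟩ := key (fun n => (u n : H)) hv (by rw [hz]; exact tendsto_const_nhds)
      have hxΛ : x ∈ Λ :=
        hΛclosed.mem_of_tendsto hx (Eventually.of_forall fun k => (u (φ k)).2)
      have hxnorm : ‖x‖ ≤ 1 := by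
        have hnt : Tendsto (fun k => ‖((u (φ k) : H))‖) atTop (𝓝 ‖x‖) := hx.norm
        exact le_of_tendsto hnt (Eventually.of_forall fun k => hv (φ k))
      refine ⟨⟨x, hxΛ⟩, ?_, φ, hφ, ?_⟩
      · rw [mem_closedBall_zero_iff]
        simpa using hxnorm
      · exact tendsto_subtype_rng.mpr hx
    exact FiniteDimensional.of_isCompact_closedBall₀ ℝ one_pos hseq.isCompact
  -- The orthogonal projection onto the kernel.
  set P : H →L[ℝ] H := Λ.subtypeL.comp (Λ.orthogonalProjectionOnto) with hPdef
  have hPmem : ∀ h : H, P h ∈ Λ := fun h => (Λ.orthogonalProjectionOnto h).2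
  have hPorth : ∀ h : H, h - P h ∈ Λᗮ := fun h =>
    Submodule.sub_starProjection_mem_orthogonal (K := Λ) h
  -- Coercivity on the orthogonal complement of the kernel.
  have claim : ∃ c : ℝ, 0 < c ∧ ∀ x ∈ Λᗮ, ⟪A x, x⟫ ≥ c * ‖x‖ ^ 2 := by
    by_contra hcon
    push_neg at hcon
    have hseq : ∀ n : ℕ, ∃ x, x ∈ Λᗮ ∧ ⟪A x, x⟫ < (1 / (n + 1)) * ‖x‖ ^ 2 := by
      intro n
      obtain ⟨x, hx1, hx2⟩ := hcon (1 / (n + 1)) (by positivity)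
      exact ⟨x, hx1, hx2⟩
    choose x hxΛ hxlt using hseq
    have hxne : ∀ n, x n ≠ 0 := by
      intro n hn
      have := hxlt n
      rw [hn] at this
      simp at this
    set u : ℕ → H := fun n => (‖x n‖⁻¹ : ℝ) • x n with hudef
    have hnu : ∀ n, ‖u n‖ = 1 := fun n => norm_smul_inv_norm (hxne n)
    have huΛ : ∀ n, u n ∈ Λᗮ := fun n => Submodule.smul_mem _ _ (hxΛ n)
    have hue : ∀ n, ⟪A (u n), u n⟫ < 1 / (n + 1) := by
      intro n
      have hxpos : (0 : ℝ) < ‖x n‖ := norm_pos_iff.mpr (hxne n)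
      have h1 : ⟪A (u n), u n⟫ = (‖x n‖⁻¹) ^ 2 * ⟪A (x n), x n⟫ := by
        simp only [hudef, map_smul, real_inner_smul_left, real_inner_smul_right]
        ring
      have h2 : (‖x n‖⁻¹) ^ 2 * ⟪A (x n), x n⟫
          < (‖x n‖⁻¹) ^ 2 * ((1 / (n + 1)) * ‖x n‖ ^ 2) :=
        mul_lt_mul_of_pos_left (hxlt n) (by positivity)
      have h3 : (‖x n‖⁻¹) ^ 2 * ((1 / (n + 1)) * ‖x n‖ ^ 2) = 1 / (n + 1) := by
        field_simp
      rw [h1]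
      rw [h3] at h2
      exact h2
    have hetend : Tendsto (fun n => ⟪A (u n), u n⟫) atTop (𝓝 0) := by
      apply squeeze_zero (fun n => hApos (u n)) (fun n => (hue n).le)
      exact tendsto_one_div_add_atTop_nhds_zero_nat
    obtain ⟨z, φ, hφ, hz⟩ := key u (fun n => (hnu n).le) hetend
    have hzorth : z ∈ Λᗮ :=
      Λ.isClosed_orthogonal.mem_of_tendsto hz (Eventually.of_forall fun k => huΛ (φ k))
    have hznorm : ‖z‖ = 1 := by
      have hnt : Tendsto (fun k => ‖(u ∘ φ) k‖) atTop (𝓝 ‖z‖) := hz.norm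
      have hconst : (fun k => ‖(u ∘ φ) k‖) = fun _ => (1 : ℝ) := by
        funext k
        exact hnu (φ k)
      rw [hconst] at hnt
      exact tendsto_nhds_unique hnt tendsto_const_nhds
    have hzq : ⟪A z, z⟫ = 0 := by
      have hA : Tendsto (fun k => A ((u ∘ φ) k)) atTop (𝓝 (A z)) :=
        (A.continuous.tendsto z).comp hz
      have h1 : Tendsto (fun k => ⟪A ((u ∘ φ) k), (u ∘ φ) k⟫) atTop (𝓝 ⟪A z, z⟫) :=
        hA.inner hz
      have h2 : Tendsto (fun k => ⟪A ((u ∘ φ) k), (u ∘ φ) k⟫) atTop (𝓝 0) :=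
        hetend.comp hφ.tendsto_atTop
      exact tendsto_nhds_unique h1 h2
    have hAz : A z = 0 := aux_apply_eq_zero_of_quadratic_eq_zero A hAsym hApos hzq
    have hzΛ : z ∈ Λ := LinearMap.mem_ker.mpr hAz
    have hz0 : z = 0 := by
      have := (Submodule.mem_orthogonal Λ z).mp hzorth z hzΛ
      exact inner_self_eq_zero.mp this
    rw [hz0, norm_zero] at hznorm
    norm_num at hznorm
  obtain ⟨c, hc, hcoer⟩ := claim
  refine ⟨hfin, c, P, hc, hPmem, ?_, ?_⟩
  · intro h χ hχ
    exact (Submodule.mem_orthogonal' Λ _).mp (hPorth h) χ hχ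
  · intro h
    have hw := hPorth h
    have hAPh : A (P h) = 0 := hPmem h
    have hinner0 : ⟪A (h - P h), P h⟫ = 0 := by
      rw [hAsym, hAPh, inner_zero_right]
    have heq : ⟪A h, h⟫ = ⟪A (h - P h), h - P h⟫ := by
      have hAh : A h = A (h - P h) := by rw [map_sub, hAPh, sub_zero]
      calc ⟪A h, h⟫ = ⟪A (h - P h), (h - P h) + P h⟫ := by rw [← hAh, sub_add_cancel]
        _ = ⟪A (h - P h), h - P h⟫ + ⟪A (h - P h), P h⟫ := inner_add_right _ _ _
        _ = ⟪A (h - P h), h - P h⟫ := by rw [hinner0, add_zero]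
    rw [heq]
    exact hcoer _ hw
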